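/- Let α < 0, R̄ < 0, and M₀ < 0 be real numbers, and set c₁ := R̄/M₀ + 1. Then for all t ≥ 0 the denominator −1 + c₁·e^{αR̄t} is positive, and M₀·e^{−αR̄t} ≤ R̄/(−1 + c₁·e^{αR̄t}) ≤ 0. -/
import Mathlib


/-- Exponential lower bound for the explicit solution of the comparison ODE:
for `α < 0`, `R̄ < 0`, `M₀ < 0` and `c₁ = R̄/M₀ + 1`, the denominator
`-1 + c₁ e^{αR̄t}` is positive and
`M₀ e^{-αR̄t} ≤ R̄/(-1 + c₁ e^{αR̄t}) ≤ 0` for all `t ≥ 0`. -/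
theorem stmt_13 (α Rbar M₀ : ℝ) (hα : α < 0) (hR : Rbar < 0) (hM : M₀ < 0)
    (c₁ : ℝ) (hc₁ : c₁ = Rbar / M₀ + 1) :
    ∀ t : ℝ, 0 ≤ t →
      0 < -1 + c₁ * Real.exp (α * Rbar * t) ∧
      M₀ * Real.exp (-(α * Rbar * t)) ≤ Rbar / (-1 + c₁ * Real.exp (α * Rbar * t)) ∧
      Rbar / (-1 + c₁ * Real.exp (α * Rbar * t)) ≤ 0 := by
  intro t ht
  have hu : 0 ≤ α * Rbar * t := mul_nonneg (le_of_lt (mul_pos_of_neg_of_neg hα hR)) ht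
  have he1 : 1 ≤ Real.exp (α * Rbar * t) := Real.one_le_exp hu
  have hc : 1 < c₁ := by
    rw [hc₁]
    have : 0 < Rbar / M₀ := div_pos_of_neg_of_neg hR hM
    linarith
  have hD : 0 < -1 + c₁ * Real.exp (α * Rbar * t) := by nlinarith
  refine ⟨hD, ?_, ?_⟩
  · rw [le_div_iff₀ hD]
    have hM0 : M₀ ≠ 0 := ne_of_lt hM
    have hc₁M : c₁ * M₀ = Rbar + M₀ := by
      rw [hc₁]; field_simp
    have hee : Real.exp (-(α * Rbar * t)) * Real.exp (α * Rbar * t) = 1 := by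
      rw [← Real.exp_add]; simp
    have hexm : Real.exp (-(α * Rbar * t)) ≤ 1 := Real.exp_le_one_iff.mpr (by linarith)
    nlinarith [Real.exp_pos (α * Rbar * t), Real.exp_pos (-(α * Rbar * t))]
  · exact div_nonpos_of_nonpos_of_nonneg (le_of_lt hR) (le_of_lt hD)
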